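/- Let p ∈ Q^tree_∅(K,Σ). Then: (1) if μ : T^p → [0,1] is a semi-F-measure on p, then μ(η) ≤ μ^F_p(η) for every η ∈ T^p; (2) if there is a semi-F-measure μ on p with μ(root(T^p)) > 0, then p ∈ Q^mt_∅(K,Σ,F); (3) if p ∈ Q^mt_∅(K,Σ,F), then the map η ↦ μ^F_p(η) : T^p → [0,1] is an F-measure on p. -/

import Mathlib

namespace MeasuredTrees

/-- `η` is a valid node for `H`: a finite sequence with `η i ∈ H i` for all `i < lh η`. -/
def ValidNode (H : ℕ → Finset ℕ) (η : List ℕ) : Prop :=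
  ∀ (i : ℕ) (h : i < η.length), η.get ⟨i, h⟩ ∈ H i

/-- A local tree-creature for `H`: a node `η_t`, a nonnegative norm, and a nonempty set
`pos(t)` of nodes of length `lh(η_t)+1` properly extending `η_t`. -/
structure TCreature (H : ℕ → Finset ℕ) where
  node : List ℕ
  node_ok : ValidNode H node
  nor : ℝ
  nor_nonneg : 0 ≤ nor
  pos : Finset (List ℕ)
  pos_ne : pos.Nonempty
  pos_ok : ∀ ν ∈ pos, node <+: ν ∧ ν.length = node.length + 1 ∧ ValidNode H ν

/-- A measured tree creating triple `(K, Σ, F)` for `H` (data part). -/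
structure MTriple (H : ℕ → Finset ℕ) where
  K : Set (TCreature H)
  Sig : TCreature H → Set (TCreature H)
  F : TCreature H → (List ℕ → ℝ) → ℝ

variable {H : ℕ → Finset ℕ}

/-- The structural requirements: `(K,Σ)` is a strongly finitary local tree-creating
pair, each `H m` has at least two elements, and each `F t` is a map
`[0,1]^{pos t} → [0,1]` (represented on total functions, depending only on the
values on `pos t`). -/
structure MTriple.Good (T : MTriple H) : Prop where
  H_two : ∀ m : ℕ, 2 ≤ (H m).card
  sig_mem : ∀ t ∈ T.K, T.Sig t ⊆ T.K
  sig_node : ∀ t s : TCreature H, s ∈ T.Sig t → s.node = t.node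
  sig_pos : ∀ t s : TCreature H, s ∈ T.Sig t → s.pos ⊆ t.pos
  sig_trans : ∀ t s : TCreature H, s ∈ T.Sig t → T.Sig s ⊆ T.Sig t
  finitary : ∀ η : List ℕ, {t : TCreature H | t ∈ T.K ∧ t.node = η}.Finite
  F_congr : ∀ (t : TCreature H) (r r' : List ℕ → ℝ),
    (∀ ν ∈ t.pos, r ν = r' ν) → T.F t r = T.F t r'
  F_mem : ∀ (t : TCreature H) (r : List ℕ → ℝ),
    (∀ ν ∈ t.pos, r ν ∈ Set.Icc (0 : ℝ) 1) → T.F t r ∈ Set.Icc (0 : ℝ) 1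

/-- The triple is nice: monotonicity (α), splitting (β), homogeneity (γ) and
approximation (δ). -/
structure MTriple.Nice (T : MTriple H) : Prop where
  mono : ∀ t ∈ T.K, ∀ r r' : List ℕ → ℝ,
    (∀ ν ∈ t.pos, r ν ∈ Set.Icc (0 : ℝ) 1) → (∀ ν ∈ t.pos, r' ν ∈ Set.Icc (0 : ℝ) 1) →
    (∀ ν ∈ t.pos, r ν ≤ r' ν) → T.F t r ≤ T.F t r'
  split : ∀ t ∈ T.K, 1 < t.nor →
    ∀ r r0 r1 : List ℕ → ℝ,
    (∀ ν ∈ t.pos, r ν ∈ Set.Icc (0 : ℝ) 1 ∧ r0 ν ∈ Set.Icc (0 : ℝ) 1 ∧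
      r1 ν ∈ Set.Icc (0 : ℝ) 1) →
    (∀ ν ∈ t.pos, r ν ≤ r0 ν + r1 ν) →
    ((2 : ℝ) ^ (2 ^ t.node.length))⁻¹ ≤ T.F t r →
    ∃ c0 c1 : ℝ, ∃ s0 s1 : TCreature H, s0 ∈ T.Sig t ∧ s1 ∈ T.Sig t ∧
      c0 + c1 = (1 - ((2 : ℝ) ^ (2 ^ t.node.length))⁻¹) * T.F t r ∧
      (0 < c0 → t.nor - 1 ≤ s0.nor ∧ (∀ ν ∈ s0.pos, 0 < r0 ν) ∧ c0 ≤ T.F s0 r0) ∧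
      (0 < c1 → t.nor - 1 ≤ s1.nor ∧ (∀ ν ∈ s1.pos, 0 < r1 ν) ∧ c1 ≤ T.F s1 r1)
  scale : ∀ t ∈ T.K, ∀ b : ℝ, b ∈ Set.Icc (0 : ℝ) 1 →
    ∀ r : List ℕ → ℝ, (∀ ν ∈ t.pos, r ν ∈ Set.Icc (0 : ℝ) 1) →
    T.F t (fun ν => b * r ν) = b * T.F t r
  approx : ∀ t ∈ T.K, ∀ r : List ℕ → ℝ, (∀ ν ∈ t.pos, r ν ∈ Set.Icc (0 : ℝ) 1) →
    ∀ ε : ℝ, 0 < ε →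
    ∃ r' : List ℕ → ℝ, (∀ ν ∈ t.pos, r ν < r' ν) ∧
      ∀ r'' : List ℕ → ℝ, (∀ ν ∈ t.pos, r'' ν ∈ Set.Icc (0 : ℝ) 1) →
        (∀ ν ∈ t.pos, r ν ≤ r'' ν ∧ r'' ν < r' ν) → T.F t r'' < T.F t r + ε

/-- A condition of `Q^tree_∅(K,Σ)`: a tree of nodes with no maximal elements,
together with a creature of `K` at every node whose possibilities are exactly the
successors in the tree. -/
structure Cond (T : MTriple H) where
  tree : Set (List ℕ)
  root : List ℕ
  root_mem : root ∈ tree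
  root_le : ∀ η ∈ tree, root <+: η
  closed : ∀ η ∈ tree, ∀ ν : List ℕ, root <+: ν → ν <+: η → ν ∈ tree
  c : List ℕ → TCreature H
  c_mem : ∀ η ∈ tree, c η ∈ T.K
  c_node : ∀ η ∈ tree, (c η).node = η
  succ_eq : ∀ η ∈ tree, ∀ ν : List ℕ,
    ((ν ∈ tree ∧ η <+: ν ∧ ν.length = η.length + 1) ↔ ν ∈ (c η).pos)

variable {T : MTriple H}

/-- The initial segment of length `n` of an infinite sequence. -/
def initSeg (x : ℕ → ℕ) (n : ℕ) : List ℕ := (List.range n).map x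

/-- `x` is an ω-branch of the tree of `p` through the node `η`. -/
def IsBranchAt (p : Cond T) (η : List ℕ) (x : ℕ → ℕ) : Prop :=
  initSeg x η.length = η ∧ ∀ n : ℕ, η.length ≤ n → initSeg x n ∈ p.tree

/-- `A` is a front of the tree of `p^{[η]}`: a set of nodes of the tree extending `η`
met by every ω-branch through `η`. -/
def IsFrontAt (p : Cond T) (η : List ℕ) (A : Set (List ℕ)) : Prop :=
  (∀ ρ ∈ A, ρ ∈ p.tree ∧ η <+: ρ) ∧
  ∀ x : ℕ → ℕ, IsBranchAt p η x → ∃ n : ℕ, initSeg x n ∈ A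

/-- `ρ ∈ T[p^{[η]}, A]`, i.e. `ρ` is a node of the tree of `p` extending `η` and lying
(weakly) below some member of `A`. -/
def InCone (p : Cond T) (η : List ℕ) (A : Set (List ℕ)) (ρ : List ℕ) : Prop :=
  ρ ∈ p.tree ∧ η <+: ρ ∧ ∃ ν ∈ A, ρ <+: ν

/-- `m` is the function `μ^f_{p^{[η]},A}` (extended by `0` off `T[p^{[η]},A]`):
it equals `f` on `A` and satisfies the downward recursion
`m ρ = F_{t^p_ρ}(m ν : ν ∈ pos(t^p_ρ))` on `T[p^{[η]},A] ∖ A`. -/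
def IsMuAt (p : Cond T) (η : List ℕ) (A : Set (List ℕ))
    (f : List ℕ → ℝ) (m : List ℕ → ℝ) : Prop :=
  (∀ ρ ∈ A, m ρ = f ρ) ∧
  (∀ ρ : List ℕ, InCone p η A ρ → ρ ∉ A → m ρ = T.F (p.c ρ) m) ∧
  (∀ ρ : List ℕ, ¬ InCone p η A ρ → m ρ = 0)

/-- `μ^F_p(η)`: the infimum over fronts `A` of `p^{[η]}` of `μ^{1_A}_{p^{[η]},A}(η)`. -/
noncomputable def muAt (p : Cond T) (η : List ℕ) : ℝ :=
  sInf {x : ℝ | ∃ (A : Set (List ℕ)) (m : List ℕ → ℝ),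
    IsFrontAt p η A ∧ IsMuAt p η A (fun _ => 1) m ∧ x = m η}

/-- `μ^F(p) = μ^F_p(root p)`. -/
noncomputable def muF (p : Cond T) : ℝ := muAt p p.root

/-- The norm condition (c)₄ defining `Q^tree_4(K,Σ)` : for every `n` the set of nodes
above which all norms are at least `n` contains a front. -/
def Qtree4 (p : Cond T) : Prop :=
  ∀ n : ℕ, ∃ A : Set (List ℕ), IsFrontAt p p.root A ∧
    ∀ ν ∈ A, ∀ ρ ∈ p.tree, ν <+: ρ → (n : ℝ) ≤ (p.c ρ).nor

/-- The order on conditions: `p ≤ q` iff the tree of `q` is contained in that of `p`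
and each creature of `q` belongs to `Σ` of the corresponding creature of `p`. -/
def CondLe (p q : Cond T) : Prop :=
  q.tree ⊆ p.tree ∧ ∀ η ∈ q.tree, q.c η ∈ T.Sig (p.c η)

/-- `p` is normal: `μ^F_p(η) > 0` for every node `η` of the tree of `p`. -/
def Normal (p : Cond T) : Prop := ∀ η ∈ p.tree, 0 < muAt p η

/-- `p` is special: `μ^F_p(η) ≥ 2^(−2^(lh η + 1))` for every node `η`. -/
def Special (p : Cond T) : Prop :=
  ∀ η ∈ p.tree, ((2 : ℝ) ^ (2 ^ (η.length + 1)))⁻¹ ≤ muAt p η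

/-- `m` is a semi-`F`-measure on `p`: a `[0,1]`-valued function on the tree of `p` with
`m η ≤ F_{t^p_η}(m ν : ν ∈ pos(t^p_η))` for all nodes `η`. -/
def IsSemiMeasure (p : Cond T) (m : List ℕ → ℝ) : Prop :=
  (∀ η ∈ p.tree, m η ∈ Set.Icc (0 : ℝ) 1) ∧
  ∀ η ∈ p.tree, m η ≤ T.F (p.c η) m

/-! ### Auxiliary lemmas -/

theorem initSeg_length (x : ℕ → ℕ) (n : ℕ) : (initSeg x n).length = n := by
  simp [initSeg]

theorem initSeg_getElem (x : ℕ → ℕ) (n k : ℕ) (h : k < (initSeg x n).length) :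
    (initSeg x n)[k] = x k := by
  simp [initSeg]

theorem initSeg_take (x : ℕ → ℕ) {n m : ℕ} (h : n ≤ m) :
    (initSeg x m).take n = initSeg x n := by
  show (List.map x (List.range m)).take n = List.map x (List.range n)
  rw [← List.map_take, List.take_range, Nat.min_eq_left h]

theorem initSeg_prefix (x : ℕ → ℕ) {n m : ℕ} (h : n ≤ m) :
    initSeg x n <+: initSeg x m := by
  rw [← initSeg_take x h]; exact List.take_prefix _ _

theorem prefix_antisym {l₁ l₂ : List ℕ} (h1 : l₁ <+: l₂) (h2 : l₂ <+: l₁) : l₁ = l₂ :=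
  h1.eq_of_length (le_antisymm h1.length_le h2.length_le)

/-- A helper iterating a step function. -/
def chainFn (step : List ℕ → List ℕ) (ν : List ℕ) : ℕ → List ℕ
  | 0 => ν
  | n + 1 => step (chainFn step ν n)

theorem exists_branch_in (p : Cond T) (S : Set (List ℕ))
    (hS : ∀ ρ ∈ S, ρ ∈ p.tree)
    (hstep : ∀ ρ ∈ S, ∃ ν, ν ∈ S ∧ ρ <+: ν ∧ ν.length = ρ.length + 1)
    (ν : List ℕ) (hν : ν ∈ S) :
    ∃ x : ℕ → ℕ, IsBranchAt p ν x ∧ ∀ n, ν.length ≤ n → initSeg x n ∈ S := by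
  classical
  set g : ℕ → List ℕ :=
    chainFn (fun ρ => if h : ρ ∈ S then (hstep ρ h).choose else []) ν with hg
  have hgstep : ∀ n, g (n + 1) = if h : g n ∈ S then (hstep (g n) h).choose else [] :=
    fun _ => rfl
  have hg0 : g 0 = ν := rfl
  have hinv : ∀ n, g n ∈ S ∧ (g n).length = ν.length + n ∧ g n <+: g (n + 1) := by
    intro n
    induction n with
    | zero =>
      refine ⟨hν, by simp [hg0], ?_⟩
      rw [hgstep 0, hg0, dif_pos hν]
      exact (hstep ν hν).choose_spec.2.1
    | succ n ih =>
      have hmem : g (n + 1) ∈ S := by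
        rw [hgstep n, dif_pos ih.1]
        exact (hstep (g n) ih.1).choose_spec.1
      refine ⟨hmem, ?_, ?_⟩
      · rw [hgstep n, dif_pos ih.1]
        rw [(hstep (g n) ih.1).choose_spec.2.2, ih.2.1]; omega
      · rw [hgstep (n + 1), dif_pos hmem]
        exact (hstep (g (n + 1)) hmem).choose_spec.2.1
  have hchain : ∀ {n m : ℕ}, n ≤ m → g n <+: g m := by
    intro n m h
    induction m with
    | zero => have : n = 0 := Nat.le_zero.mp h; subst this; exact List.prefix_refl _
    | succ m ih =>
      rcases Nat.lt_or_ge n (m + 1) with h' | h'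
      · exact (ih (Nat.lt_succ_iff.mp h')).trans (hinv m).2.2
      · have : n = m + 1 := le_antisymm h h'
        subst this; exact List.prefix_refl _
  set x : ℕ → ℕ := fun k => (g (k + 1 - ν.length)).getD k 0 with hx
  have hidx : ∀ k, k < (g (k + 1 - ν.length)).length := by
    intro k
    rw [(hinv _).2.1]
    omega
  have key : ∀ n, ν.length ≤ n → initSeg x n = g (n - ν.length) := by
    intro n hn
    apply List.ext_getElem
    · rw [initSeg_length, (hinv _).2.1]; omega
    · intro k hk1 hk2
      rw [initSeg_getElem]
      have hkn : k < n := by rwa [initSeg_length] at hk1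
      have hle : k + 1 - ν.length ≤ n - ν.length := by omega
      have hpre := hchain hle
      show (g (k + 1 - ν.length)).getD k 0 = _
      rw [List.getD_eq_getElem _ 0 (hidx k)]
      exact List.IsPrefix.getElem hpre (hidx k)
  have hν0 : initSeg x ν.length = ν := by
    have := key ν.length le_rfl
    simpa [hg0] using this
  refine ⟨x, ⟨hν0, fun n hn => ?_⟩, fun n hn => ?_⟩
  · rw [key n hn]; exact hS _ (hinv _).1
  · rw [key n hn]; exact (hinv _).1

theorem exists_succ (p : Cond T) {ρ : List ℕ} (hρ : ρ ∈ p.tree) :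
    ∃ ν, ν ∈ p.tree ∧ ρ <+: ν ∧ ν.length = ρ.length + 1 := by
  obtain ⟨ν, hν⟩ := (p.c ρ).pos_ne
  exact ⟨ν, (p.succ_eq ρ hρ ν).mpr hν⟩

theorem exists_branch (p : Cond T) {ν : List ℕ} (hν : ν ∈ p.tree) :
    ∃ x : ℕ → ℕ, IsBranchAt p ν x := by
  obtain ⟨x, hx, -⟩ := exists_branch_in p p.tree (fun _ h => h)
    (fun ρ hρ => exists_succ p hρ) ν hν
  exact ⟨x, hx⟩

theorem branchAt_of_prefix (p : Cond T) {η ρ : List ℕ} (hη : η ∈ p.tree) (hρ : ρ ∈ p.tree)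
    (hpre : η <+: ρ) {x : ℕ → ℕ} (hx : IsBranchAt p ρ x) : IsBranchAt p η x := by
  have hlen : η.length ≤ ρ.length := hpre.length_le
  have h1 : initSeg x η.length = η := by
    have : (initSeg x ρ.length).take η.length = η := by
      rw [hx.1]; exact (List.prefix_iff_eq_take.mp hpre).symm
    rwa [initSeg_take x hlen] at this
  refine ⟨h1, fun n hn => ?_⟩
  rcases le_or_gt ρ.length n with h | h
  · exact hx.2 n h
  · have hpre2 : initSeg x n <+: ρ := by
      rw [← hx.1]; exact initSeg_prefix x h.le
    refine p.closed ρ hρ _ ?_ hpre2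
    calc p.root <+: η := p.root_le η hη
      _ = initSeg x η.length := h1.symm
      _ <+: initSeg x n := initSeg_prefix x hn

/-- The set whose infimum is `muAt`. -/
def muSet (p : Cond T) (η : List ℕ) : Set ℝ :=
  {x : ℝ | ∃ (A : Set (List ℕ)) (m : List ℕ → ℝ),
    IsFrontAt p η A ∧ IsMuAt p η A (fun _ => 1) m ∧ x = m η}

theorem muAt_eq (p : Cond T) (η : List ℕ) : muAt p η = sInf (muSet p η) := rfl

/-- A node of the tree with no member of the front strictly below it lies in the cone. -/
theorem fresh_inCone (p : Cond T) {η : List ℕ} (hη : η ∈ p.tree) {A : Set (List ℕ)}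
    (hA : IsFrontAt p η A) {ρ : List ℕ} (hρt : ρ ∈ p.tree) (hηρ : η <+: ρ)
    (hfresh : ∀ σ ∈ A, η <+: σ → σ <+: ρ → σ = ρ) (hρA : ρ ∉ A) :
    InCone p η A ρ := by
  obtain ⟨x, hx⟩ := exists_branch p hρt
  have hxη : IsBranchAt p η x := branchAt_of_prefix p hη hρt hηρ hx
  obtain ⟨q, hq⟩ := hA.2 x hxη
  obtain ⟨hσt, hησ⟩ := hA.1 _ hq
  rcases le_or_gt q ρ.length with h | h
  · exfalso
    have hσρ : initSeg x q <+: ρ := by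
      rw [← hx.1]; exact initSeg_prefix x h
    exact hρA (hfresh _ hq hησ hσρ ▸ hq)
  · have : ρ <+: initSeg x q := by
      rw [← hx.1]; exact initSeg_prefix x h.le
    exact ⟨hρt, hηρ, _, hq, this⟩

/-- König: the part of the tree at or above `η` missing the front `A` has bounded length. -/
theorem front_bound (p : Cond T) {η : List ℕ} (hη : η ∈ p.tree) {A : Set (List ℕ)}
    (hA : IsFrontAt p η A) :
    ∃ M : ℕ, ∀ ρ ∈ p.tree, η <+: ρ →
      (∀ σ ∈ A, η <+: σ → σ <+: ρ → False) → ρ.length ≤ M := by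
  classical
  by_contra hcon
  push_neg at hcon
  set B : Set (List ℕ) :=
    {ρ | ρ ∈ p.tree ∧ η <+: ρ ∧ ∀ σ ∈ A, η <+: σ → σ <+: ρ → False} with hB
  have hcon' : ∀ M : ℕ, ∃ ρ ∈ B, M < ρ.length := by
    intro M
    obtain ⟨ρ, h1, h2, h3, h4⟩ := hcon M
    exact ⟨ρ, ⟨h1, h2, h3⟩, h4⟩
  set C : Set (List ℕ) := {ρ | ρ ∈ B ∧ ∀ M : ℕ, ∃ ρ' ∈ B, ρ <+: ρ' ∧ M ≤ ρ'.length} with hC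
  have hηA : η ∉ A := by
    intro hmem
    obtain ⟨ρ, hρ, -⟩ := hcon' 0
    exact hρ.2.2 η hmem (List.prefix_refl _) hρ.2.1
  have hηC : η ∈ C := by
    refine ⟨⟨hη, List.prefix_refl _, fun σ hσ h1 h2 => hηA ((prefix_antisym h1 h2).symm ▸ hσ)⟩, ?_⟩
    intro M
    obtain ⟨ρ, hρ, hlen⟩ := hcon' M
    exact ⟨ρ, hρ, hρ.2.1, hlen.le⟩
  have hstep : ∀ ρ ∈ C, ∃ ν, ν ∈ C ∧ ρ <+: ν ∧ ν.length = ρ.length + 1 := by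
    intro ρ hρ
    by_contra hno
    push_neg at hno
    have hb : ∀ ν : List ℕ, ∃ M : ℕ, ν ∈ (p.c ρ).pos →
        ∀ ρ' ∈ B, ν <+: ρ' → ρ'.length ≤ M := by
      intro ν
      by_cases hν : ν ∈ (p.c ρ).pos
      · obtain ⟨hνt, hρν, hνlen⟩ := (p.succ_eq ρ hρ.1.1 ν).mpr hν
        by_cases hνB : ν ∈ B
        · have hνC : ν ∉ C := fun h => hno ν h hρν hνlen
          have : ¬ ∀ M : ℕ, ∃ ρ' ∈ B, ν <+: ρ' ∧ M ≤ ρ'.length := fun h => hνC ⟨hνB, h⟩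
          push_neg at this
          obtain ⟨M, hM⟩ := this
          exact ⟨M, fun _ ρ' h1 h2 => by
            rcases lt_or_ge ρ'.length M with h | h
            · exact h.le
            · exact absurd h (by have := hM ρ' h1 h2; omega)⟩
        · refine ⟨0, fun _ ρ' h1 h2 => absurd ?_ hνB⟩
          exact ⟨p.closed ρ' h1.1 ν ((p.root_le ρ hρ.1.1).trans hρν) h2, hρ.1.2.1.trans hρν,
            fun σ hσ ha hb' => h1.2.2 σ hσ ha (hb'.trans h2)⟩
      · exact ⟨0, fun h => absurd h hν⟩
    choose Mf hMf using hb
    set M : ℕ := (p.c ρ).pos.sup Mf with hM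
    obtain ⟨ρ', hρ'B, hρρ', hρ'len⟩ := hρ.2 (M + ρ.length + 1)
    set ν₀ : List ℕ := ρ'.take (ρ.length + 1) with hν₀
    have hν₀pre : ν₀ <+: ρ' := List.take_prefix _ _
    have hν₀len : ν₀.length = ρ.length + 1 := by
      rw [hν₀, List.length_take]; omega
    have hρν₀ : ρ <+: ν₀ :=
      List.prefix_of_prefix_length_le hρρ' hν₀pre (by omega)
    have hν₀t : ν₀ ∈ p.tree :=
      p.closed ρ' hρ'B.1 ν₀ ((p.root_le ρ hρ.1.1).trans hρν₀) hν₀pre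
    have hν₀pos : ν₀ ∈ (p.c ρ).pos := (p.succ_eq ρ hρ.1.1 ν₀).mp ⟨hν₀t, hρν₀, hν₀len⟩
    have := hMf ν₀ hν₀pos ρ' hρ'B hν₀pre
    have hsup : Mf ν₀ ≤ M := Finset.le_sup hν₀pos
    omega
  obtain ⟨x, hx, hxC⟩ := exists_branch_in p C (fun ρ hρ => hρ.1.1) hstep η hηC
  obtain ⟨q, hq⟩ := hA.2 x hx
  obtain ⟨hσt, hησ⟩ := hA.1 _ hq
  have hqlen : η.length ≤ q := by
    have := hησ.length_le
    rwa [initSeg_length] at this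
  exact (hxC q hqlen).1.2.2 _ hq hησ (List.prefix_refl _)

theorem zero_semi (hG : T.Good) (p : Cond T) : IsSemiMeasure p (fun _ => 0) :=
  ⟨fun _ _ => ⟨le_refl 0, zero_le_one⟩,
   fun η _ => (hG.F_mem (p.c η) _ (fun _ _ => ⟨le_refl 0, zero_le_one⟩)).1⟩

/-- Main workhorse: values of `μ^f_{p,A}` lie in `[0,1]` and dominate any
semi-`F`-measure, at every node not strictly above the front. -/
theorem muAt_main (hG : T.Good) (hN : T.Nice) (p : Cond T) {η : List ℕ} (hη : η ∈ p.tree)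
    {A : Set (List ℕ)} (hA : IsFrontAt p η A) {m : List ℕ → ℝ}
    (hm : IsMuAt p η A (fun _ => 1) m) {w : List ℕ → ℝ} (hw : IsSemiMeasure p w) :
    ∀ ρ ∈ p.tree, η <+: ρ → (∀ σ ∈ A, η <+: σ → σ <+: ρ → σ = ρ) →
      0 ≤ m ρ ∧ m ρ ≤ 1 ∧ w ρ ≤ m ρ := by
  obtain ⟨M, hM⟩ := front_bound p hη hA
  suffices key : ∀ n : ℕ, ∀ ρ, ρ ∈ p.tree → η <+: ρ →
      (∀ σ ∈ A, η <+: σ → σ <+: ρ → σ = ρ) → M + 1 - ρ.length ≤ n →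
      0 ≤ m ρ ∧ m ρ ≤ 1 ∧ w ρ ≤ m ρ by
    intro ρ h1 h2 h3
    exact key (M + 1) ρ h1 h2 h3 (by omega)
  intro n
  induction n with
  | zero =>
    intro ρ hρt hηρ hfresh hn
    by_cases hρA : ρ ∈ A
    · rw [hm.1 ρ hρA]
      exact ⟨zero_le_one, le_refl 1, (hw.1 ρ hρt).2⟩
    · exfalso
      have := hM ρ hρt hηρ (fun σ hσ h1 h2 => hρA (hfresh σ hσ h1 h2 ▸ hσ))
      omega
  | succ n ih =>
    intro ρ hρt hηρ hfresh hn
    by_cases hρA : ρ ∈ A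
    · rw [hm.1 ρ hρA]
      exact ⟨zero_le_one, le_refl 1, (hw.1 ρ hρt).2⟩
    · have hlenM : ρ.length ≤ M :=
        hM ρ hρt hηρ (fun σ hσ h1 h2 => hρA (hfresh σ hσ h1 h2 ▸ hσ))
      have hcone : InCone p η A ρ := fresh_inCone p hη hA hρt hηρ hfresh hρA
      have heq : m ρ = T.F (p.c ρ) m := hm.2.1 ρ hcone hρA
      -- facts about successors
      have hsucc : ∀ ν ∈ (p.c ρ).pos, 0 ≤ m ν ∧ m ν ≤ 1 ∧ w ν ≤ m ν ∧ ν ∈ p.tree := by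
        intro ν hν
        obtain ⟨hνt, hρν, hνlen⟩ := (p.succ_eq ρ hρt ν).mpr hν
        have hνfresh : ∀ σ ∈ A, η <+: σ → σ <+: ν → σ = ν := by
          intro σ hσ h1 h2
          rcases le_or_gt σ.length ρ.length with h | h
          · exact absurd (hfresh σ hσ h1 (List.prefix_of_prefix_length_le h2 hρν h) ▸ hσ) hρA
          · exact h2.eq_of_length (by have := h2.length_le; omega)
        have := ih ν hνt (hηρ.trans hρν) hνfresh (by omega)
        exact ⟨this.1, this.2.1, this.2.2, hνt⟩
      have hmIcc : ∀ ν ∈ (p.c ρ).pos, m ν ∈ Set.Icc (0:ℝ) 1 :=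
        fun ν hν => ⟨(hsucc ν hν).1, (hsucc ν hν).2.1⟩
      have hwIcc : ∀ ν ∈ (p.c ρ).pos, w ν ∈ Set.Icc (0:ℝ) 1 :=
        fun ν hν => hw.1 ν (hsucc ν hν).2.2.2
      have hFmem := hG.F_mem (p.c ρ) m hmIcc
      refine ⟨heq ▸ hFmem.1, heq ▸ hFmem.2, ?_⟩
      calc w ρ ≤ T.F (p.c ρ) w := hw.2 ρ hρt
        _ ≤ T.F (p.c ρ) m := hN.mono (p.c ρ) (p.c_mem ρ hρt) w m hwIcc hmIcc
            (fun ν hν => (hsucc ν hν).2.2.1)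
        _ = m ρ := heq.symm

theorem muSet_nonempty (hG : T.Good) (p : Cond T) {η : List ℕ} (hη : η ∈ p.tree) :
    (muSet p η).Nonempty := by
  classical
  set A : Set (List ℕ) := ((p.c η).pos : Set (List ℕ)) with hAdef
  set m : List ℕ → ℝ := fun ρ =>
    if ρ ∈ (p.c η).pos then 1
    else if ρ = η then T.F (p.c η) (fun σ => if σ ∈ (p.c η).pos then (1:ℝ) else 0)
    else 0 with hmdef
  have hηpos : η ∉ (p.c η).pos := by
    intro h
    have := ((p.succ_eq η hη η).mpr h).2.2
    omega
  have hfr : IsFrontAt p η A := by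
    constructor
    · intro ρ hρ
      obtain ⟨h1, h2, -⟩ := (p.succ_eq η hη ρ).mpr hρ
      exact ⟨h1, h2⟩
    · intro x hx
      refine ⟨η.length + 1, ?_⟩
      have ht : initSeg x (η.length + 1) ∈ p.tree := hx.2 _ (by omega)
      have hpre : η <+: initSeg x (η.length + 1) := by
        have := initSeg_prefix x (Nat.le_succ η.length)
        rwa [hx.1] at this
      exact (p.succ_eq η hη _).mp ⟨ht, hpre, initSeg_length x _⟩
  have hmu : IsMuAt p η A (fun _ => 1) m := by
    refine ⟨fun ρ hρ => if_pos hρ, ?_, ?_⟩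
    · intro ρ hρc hρA
      obtain ⟨hρt, hηρ, μ, hμA, hρμ⟩ := hρc
      have hμlen : μ.length = η.length + 1 := ((p.succ_eq η hη μ).mpr hμA).2.2
      have hρη : ρ = η := by
        rcases lt_or_ge ρ.length (η.length + 1) with h | h
        · exact (hηρ.eq_of_length (by have := hηρ.length_le; omega)).symm
        · exact absurd (hρμ.eq_of_length (by have := hρμ.length_le; omega) ▸ hμA) hρA
      subst hρη
      show m ρ = _
      rw [hmdef]
      simp only [if_neg hηpos, if_pos rfl]
      exact hG.F_congr (p.c ρ) _ m (fun σ hσ => by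
        simp only [hmdef, if_pos hσ])
    · intro ρ hρc
      rw [hmdef]
      simp only
      rw [if_neg, if_neg]
      · intro hρη
        subst hρη
        obtain ⟨μ, hμ⟩ := (p.c ρ).pos_ne
        obtain ⟨h1, h2, -⟩ := (p.succ_eq ρ hη μ).mpr hμ
        exact hρc ⟨hη, List.prefix_refl _, μ, hμ, h2⟩
      · intro hρpos
        obtain ⟨h1, h2, -⟩ := (p.succ_eq η hη ρ).mpr hρpos
        exact hρc ⟨h1, h2, ρ, hρpos, List.prefix_refl _⟩
  exact ⟨m η, A, m, hfr, hmu, rfl⟩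

theorem fresh_self (η : List ℕ) (A : Set (List ℕ)) :
    ∀ σ ∈ A, η <+: σ → σ <+: η → σ = η :=
  fun _ _ h1 h2 => prefix_antisym h2 h1

theorem muSet_lb (hG : T.Good) (hN : T.Nice) (p : Cond T) {η : List ℕ} (hη : η ∈ p.tree)
    {x : ℝ} (hx : x ∈ muSet p η) : 0 ≤ x ∧ x ≤ 1 := by
  obtain ⟨A, m, hA, hm, rfl⟩ := hx
  have := muAt_main hG hN p hη hA hm (zero_semi hG p) η hη (List.prefix_refl _)
    (fresh_self η A)
  exact ⟨this.1, this.2.1⟩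

theorem muSet_bddBelow (hG : T.Good) (hN : T.Nice) (p : Cond T) {η : List ℕ}
    (hη : η ∈ p.tree) : BddBelow (muSet p η) :=
  ⟨0, fun x hx => (muSet_lb hG hN p hη hx).1⟩

theorem muAt_mem_Icc (hG : T.Good) (hN : T.Nice) (p : Cond T) {η : List ℕ}
    (hη : η ∈ p.tree) : muAt p η ∈ Set.Icc (0:ℝ) 1 := by
  rw [muAt_eq]
  obtain ⟨x, hx⟩ := muSet_nonempty hG p hη
  constructor
  · exact le_csInf ⟨x, hx⟩ (fun y hy => (muSet_lb hG hN p hη hy).1)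
  · exact le_trans (csInf_le (muSet_bddBelow hG hN p hη) hx) (muSet_lb hG hN p hη hx).2

theorem semi_le_muAt (hG : T.Good) (hN : T.Nice) (p : Cond T) {w : List ℕ → ℝ}
    (hw : IsSemiMeasure p w) {η : List ℕ} (hη : η ∈ p.tree) : w η ≤ muAt p η := by
  rw [muAt_eq]
  refine le_csInf (muSet_nonempty hG p hη) (fun y hy => ?_)
  obtain ⟨A, m, hA, hm, rfl⟩ := hy
  exact (muAt_main hG hN p hη hA hm hw η hη (List.prefix_refl _) (fresh_self η A)).2.2

theorem F_le_muAt (hG : T.Good) (hN : T.Nice) (p : Cond T) {η : List ℕ}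
    (hη : η ∈ p.tree) : T.F (p.c η) (fun ν => muAt p ν) ≤ muAt p η := by
  classical
  have hposIcc : ∀ ν ∈ (p.c η).pos, muAt p ν ∈ Set.Icc (0:ℝ) 1 := by
    intro ν hν
    exact muAt_mem_Icc hG hN p ((p.succ_eq η hη ν).mpr hν).1
  conv_rhs => rw [muAt_eq]
  refine le_csInf (muSet_nonempty hG p hη) (fun y hy => ?_)
  obtain ⟨A, m, hA, hm, rfl⟩ := hy
  by_cases hηA : η ∈ A
  · rw [hm.1 η hηA]
    exact (hG.F_mem (p.c η) _ hposIcc).2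
  · have hcone : InCone p η A η :=
      fresh_inCone p hη hA hη (List.prefix_refl _) (fresh_self η A) hηA
    have heq : m η = T.F (p.c η) m := hm.2.1 η hcone hηA
    have hmIcc : ∀ ν ∈ (p.c η).pos, m ν ∈ Set.Icc (0:ℝ) 1 := by
      intro ν hν
      obtain ⟨hνt, hην, hνlen⟩ := (p.succ_eq η hη ν).mpr hν
      have hνfresh : ∀ σ ∈ A, η <+: σ → σ <+: ν → σ = ν := by
        intro σ hσ h1 h2
        rcases le_or_gt σ.length η.length with h | h
        · have hση : σ = η := prefix_antisym (List.prefix_of_prefix_length_le h2 hην h) h1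
          exact absurd (hση ▸ hσ) hηA
        · exact h2.eq_of_length (by have := h2.length_le; omega)
      have := muAt_main hG hN p hη hA hm (zero_semi hG p) ν hνt hην hνfresh
      exact ⟨this.1, this.2.1⟩
    have hle : ∀ ν ∈ (p.c η).pos, muAt p ν ≤ m ν := by
      intro ν hν
      obtain ⟨hνt, hην, hνlen⟩ := (p.succ_eq η hη ν).mpr hν
      by_cases hνA : ν ∈ A
      · rw [hm.1 ν hνA]; exact (hposIcc ν hν).2
      · -- restrict the front above ν
        set Aν : Set (List ℕ) := {ρ ∈ A | ν <+: ρ} with hAν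
        set m' : List ℕ → ℝ := fun ρ => if InCone p ν Aν ρ then m ρ else 0 with hm'
        have hAνmem : ∀ ρ ∈ Aν, ρ ∈ A ∧ ν <+: ρ := fun ρ hρ => ⟨hρ.1, hρ.2⟩
        have hfrν : IsFrontAt p ν Aν := by
          constructor
          · exact fun ρ hρ => ⟨(hA.1 ρ hρ.1).1, hρ.2⟩
          · intro x hx
            have hxη : IsBranchAt p η x := branchAt_of_prefix p hη hνt hην hx
            obtain ⟨q, hq⟩ := hA.2 x hxη
            obtain ⟨hσt, hησ⟩ := hA.1 _ hq
            have hσq : (initSeg x q).length = q := initSeg_length x q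
            rcases le_or_gt q ν.length with h | h
            · exfalso
              have hσν : initSeg x q <+: ν := by
                have := initSeg_prefix x h
                rwa [hx.1] at this
              rcases le_or_gt q η.length with h' | h'
              · have hση : initSeg x q = η := prefix_antisym
                  (List.prefix_of_prefix_length_le hσν hην (by omega)) hησ
                exact hηA (hση ▸ hq)
              · have : initSeg x q = ν := hσν.eq_of_length (by
                  have := hσν.length_le
                  have := hησ.length_le
                  omega)
                exact hνA (this ▸ hq)
            · refine ⟨q, hq, ?_⟩
              have := initSeg_prefix x h.le
              rwa [hx.1] at this
        have hmuν : IsMuAt p ν Aν (fun _ => 1) m' := by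
          refine ⟨?_, ?_, ?_⟩
          · intro ρ hρ
            have hc : InCone p ν Aν ρ := ⟨(hA.1 ρ hρ.1).1, hρ.2, ρ, hρ, List.prefix_refl _⟩
            rw [hm']
            simp only [if_pos hc]
            exact hm.1 ρ hρ.1
          · intro ρ hρc hρAν
            obtain ⟨hρt, hνρ, μ, hμ, hρμ⟩ := hρc
            have hρA : ρ ∉ A := fun h => hρAν ⟨h, hνρ⟩
            have hconeA : InCone p η A ρ := ⟨hρt, hην.trans hνρ, μ, (hAνmem μ hμ).1, hρμ⟩
            have hmm : m ρ = T.F (p.c ρ) m := hm.2.1 ρ hconeA hρA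
            have hcρ : InCone p ν Aν ρ := ⟨hρt, hνρ, μ, hμ, hρμ⟩
            rw [hm']
            simp only [if_pos hcρ]
            rw [hmm]
            refine hG.F_congr (p.c ρ) m _ (fun σ' hσ' => ?_)
            obtain ⟨hσ't, hρσ', -⟩ := (p.succ_eq ρ hρt σ').mpr hσ'
            by_cases hc : InCone p ν Aν σ'
            · simp only [hm', if_pos hc]
            · simp only [hm', if_neg hc]
              refine hm.2.2 σ' (fun hcon => hc ?_)
              obtain ⟨h1, h2, μ', hμ', h3⟩ := hcon
              exact ⟨h1, hνρ.trans hρσ', μ', ⟨hμ', (hνρ.trans hρσ').trans h3⟩, h3⟩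
          · intro ρ hρc
            rw [hm']
            simp only [if_neg hρc]
        have hνcone : InCone p ν Aν ν := by
          obtain ⟨x, hx⟩ := exists_branch p hνt
          obtain ⟨q, hq⟩ := hfrν.2 x hx
          exact ⟨hνt, List.prefix_refl _, initSeg x q, hq, (hfrν.1 _ hq).2⟩
        have : muAt p ν ≤ m' ν := by
          rw [muAt_eq]
          exact csInf_le (muSet_bddBelow hG hN p hνt) ⟨Aν, m', hfrν, hmuν, rfl⟩
        rw [hm'] at this
        simpa only [if_pos hνcone] using this
    calc T.F (p.c η) (fun ν => muAt p ν) ≤ T.F (p.c η) m :=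
          hN.mono (p.c η) (p.c_mem η hη) _ m hposIcc hmIcc hle
      _ = m η := heq.symm

theorem muAt_le_F (hG : T.Good) (hN : T.Nice) (p : Cond T) {η : List ℕ}
    (hη : η ∈ p.tree) : muAt p η ≤ T.F (p.c η) (fun ν => muAt p ν) := by
  classical
  have hposIcc : ∀ ν ∈ (p.c η).pos, muAt p ν ∈ Set.Icc (0:ℝ) 1 := by
    intro ν hν
    exact muAt_mem_Icc hG hN p ((p.succ_eq η hη ν).mpr hν).1
  refine le_of_forall_pos_le_add (fun ε hε => ?_)
  obtain ⟨r', hr'gt, hr'⟩ := hN.approx (p.c η) (p.c_mem η hη) (fun ν => muAt p ν)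
    hposIcc ε hε
  -- choose near-optimal fronts at each successor
  have hch : ∀ ν : List ℕ, ∃ (A : Set (List ℕ)) (m : List ℕ → ℝ), ν ∈ (p.c η).pos →
      IsFrontAt p ν A ∧ IsMuAt p ν A (fun _ => 1) m ∧ m ν < r' ν := by
    intro ν
    by_cases hν : ν ∈ (p.c η).pos
    · have hνt : ν ∈ p.tree := ((p.succ_eq η hη ν).mpr hν).1
      have hlt : sInf (muSet p ν) < r' ν := by
        rw [← muAt_eq]; exact hr'gt ν hν
      obtain ⟨x, hx, hxlt⟩ := exists_lt_of_csInf_lt (muSet_nonempty hG p hνt) hlt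
      obtain ⟨A, m, h1, h2, rfl⟩ := hx
      exact ⟨A, m, fun _ => ⟨h1, h2, hxlt⟩⟩
    · exact ⟨∅, fun _ => 0, fun h => absurd h hν⟩
  choose Af mf hf using hch
  set L : ℕ := η.length + 1 with hL
  set g : List ℕ → ℝ := fun ρ =>
    if L ≤ ρ.length ∧ ρ.take L ∈ (p.c η).pos then mf (ρ.take L) ρ else 0 with hgdef
  set mm : List ℕ → ℝ := fun ρ => if ρ = η then T.F (p.c η) g else g ρ with hmmdef
  set AA : Set (List ℕ) := {ρ | ∃ ν ∈ (p.c η).pos, ρ ∈ Af ν} with hAA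
  -- basic facts about successors
  have hsucc : ∀ ν ∈ (p.c η).pos, ν ∈ p.tree ∧ η <+: ν ∧ ν.length = L :=
    fun ν hν => (p.succ_eq η hη ν).mpr hν
  have htake : ∀ {ν ρ : List ℕ}, ν ∈ (p.c η).pos → ν <+: ρ → ρ.take L = ν := by
    intro ν ρ hν hpre
    have := List.prefix_iff_eq_take.mp hpre
    rw [(hsucc ν hν).2.2] at this
    exact this.symm
  have hAfmem : ∀ {ν ρ : List ℕ}, ν ∈ (p.c η).pos → ρ ∈ Af ν → ρ ∈ p.tree ∧ ν <+: ρ :=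
    fun hν hρ => (hf _ hν).1.1 _ hρ
  have hAAfact : ∀ ρ ∈ AA, ρ ∈ p.tree ∧ η <+: ρ ∧ L ≤ ρ.length ∧ ρ.take L ∈ (p.c η).pos ∧
      ρ ∈ Af (ρ.take L) := by
    intro ρ hρ
    obtain ⟨ν, hν, hρν⟩ := hρ
    obtain ⟨hρt, hνρ⟩ := hAfmem hν hρν
    have htk : ρ.take L = ν := htake hν hνρ
    refine ⟨hρt, (hsucc ν hν).2.1.trans hνρ, ?_, htk ▸ hν, htk ▸ hρν⟩
    have := hνρ.length_le
    rw [(hsucc ν hν).2.2] at this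
    exact this
  have hfrAA : IsFrontAt p η AA := by
    constructor
    · intro ρ hρ
      have := hAAfact ρ hρ
      exact ⟨this.1, this.2.1⟩
    · intro x hx
      set ν₀ : List ℕ := initSeg x L with hν₀
      have hν₀t : ν₀ ∈ p.tree := hx.2 L (by omega)
      have hην₀ : η <+: ν₀ := by
        have := initSeg_prefix x (Nat.le_succ η.length)
        rwa [hx.1] at this
      have hν₀pos : ν₀ ∈ (p.c η).pos :=
        (p.succ_eq η hη ν₀).mp ⟨hν₀t, hην₀, initSeg_length x L⟩
      have hxν₀ : IsBranchAt p ν₀ x := by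
        refine ⟨?_, fun n hn => hx.2 n ?_⟩
        · rw [hν₀, initSeg_length]
        · rw [hν₀, initSeg_length] at hn; omega
      obtain ⟨q, hq⟩ := (hf ν₀ hν₀pos).1.2 x hxν₀
      exact ⟨q, ν₀, hν₀pos, hq⟩
  have hgsucc : ∀ ν ∈ (p.c η).pos, g ν = mf ν ν := by
    intro ν hν
    have htk : ν.take L = ν := by
      rw [← (hsucc ν hν).2.2, List.take_length]
    show (if L ≤ ν.length ∧ ν.take L ∈ (p.c η).pos then mf (ν.take L) ν else 0) = mf ν ν
    rw [if_pos ⟨le_of_eq (hsucc ν hν).2.2.symm, by rw [htk]; exact hν⟩, htk]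
  have hmuAA : IsMuAt p η AA (fun _ => 1) mm := by
    refine ⟨?_, ?_, ?_⟩
    · intro ρ hρ
      obtain ⟨hρt, hηρ, hLρ, htkpos, hρAf⟩ := hAAfact ρ hρ
      have hρη : ρ ≠ η := by
        intro h; rw [h] at hLρ; omega
      show (if ρ = η then T.F (p.c η) g else g ρ) = (1:ℝ)
      rw [if_neg hρη]
      show (if L ≤ ρ.length ∧ ρ.take L ∈ (p.c η).pos then mf (ρ.take L) ρ else 0) = (1:ℝ)
      rw [if_pos ⟨hLρ, htkpos⟩]
      exact ((hf _ htkpos).2.1).1 ρ hρAf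
    · intro ρ hρc hρAA
      obtain ⟨hρt, hηρ, μ, hμAA, hρμ⟩ := hρc
      by_cases hρη : ρ = η
      · rw [hρη]
        have h1 : mm η = T.F (p.c η) g := if_pos rfl
        rw [h1]
        refine hG.F_congr (p.c η) g mm (fun σ hσ => ?_)
        have hση : σ ≠ η := by
          have := (hsucc σ hσ).2.2
          intro h; rw [h] at this; omega
        exact (if_neg hση).symm
      · have hlρ : η.length < ρ.length := by
          have h1 := hηρ.length_le
          rcases lt_or_eq_of_le h1 with h | h
          · exact h
          · exact absurd (hηρ.eq_of_length h).symm hρη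
        obtain ⟨hμt, hημ, hLμ, hμtkpos, hμAf⟩ := hAAfact μ hμAA
        set ν : List ℕ := μ.take L with hνdef
        have hνρ : ν <+: ρ :=
          List.prefix_of_prefix_length_le (List.take_prefix _ _) hρμ
            (by rw [(hsucc ν hμtkpos).2.2]; omega)
        have htkρ : ρ.take L = ν := htake hμtkpos hνρ
        have hρAf' : ρ ∉ Af ν := by
          intro h
          exact hρAA ⟨ν, hμtkpos, h⟩
        have hconeν : InCone p ν (Af ν) ρ := ⟨hρt, hνρ, μ, hμAf, hρμ⟩
        have hmf : mf ν ρ = T.F (p.c ρ) (mf ν) :=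
          ((hf ν hμtkpos).2.1).2.1 ρ hconeν hρAf'
        show (if ρ = η then T.F (p.c η) g else g ρ) = T.F (p.c ρ) mm
        rw [if_neg hρη]
        show (if L ≤ ρ.length ∧ ρ.take L ∈ (p.c η).pos then mf (ρ.take L) ρ else 0)
          = T.F (p.c ρ) mm
        rw [if_pos ⟨by omega, by rw [htkρ]; exact hμtkpos⟩]
        rw [htkρ, hmf]
        refine hG.F_congr (p.c ρ) (mf ν) mm (fun σ hσ => ?_)
        obtain ⟨hσt, hρσ, hσlen⟩ := (p.succ_eq ρ hρt σ).mpr hσ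
        have hση : σ ≠ η := by intro h; rw [h] at hσlen; omega
        have htkσ : σ.take L = ν := htake hμtkpos (hνρ.trans hρσ)
        have : mm σ = mf ν σ := by
          show (if σ = η then T.F (p.c η) g else g σ) = mf ν σ
          rw [if_neg hση]
          show (if L ≤ σ.length ∧ σ.take L ∈ (p.c η).pos then mf (σ.take L) σ else 0) = mf ν σ
          rw [if_pos ⟨by omega, by rw [htkσ]; exact hμtkpos⟩, htkσ]
        exact this.symm
    · intro ρ hρc
      have hρη : ρ ≠ η := by
        intro h
        subst h
        obtain ⟨ν, hν⟩ := (p.c ρ).pos_ne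
        have hνt := (hsucc ν hν).1
        obtain ⟨x, hx⟩ := exists_branch p hνt
        obtain ⟨q, hq⟩ := (hf ν hν).1.2 x hx
        have hνq : ν <+: initSeg x q := ((hf ν hν).1.1 _ hq).2
        exact hρc ⟨hη, List.prefix_refl _, initSeg x q, ⟨ν, hν, hq⟩,
          (hsucc ν hν).2.1.trans hνq⟩
      show (if ρ = η then T.F (p.c η) g else g ρ) = 0
      rw [if_neg hρη]
      show (if L ≤ ρ.length ∧ ρ.take L ∈ (p.c η).pos then mf (ρ.take L) ρ else 0) = 0
      by_cases hcond : L ≤ ρ.length ∧ ρ.take L ∈ (p.c η).pos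
      · rw [if_pos hcond]
        refine ((hf _ hcond.2).2.1).2.2 ρ (fun hcon => hρc ?_)
        obtain ⟨h1, h2, μ', hμ', h3⟩ := hcon
        exact ⟨h1, (hsucc _ hcond.2).2.1.trans h2, μ', ⟨_, hcond.2, hμ'⟩, h3⟩
      · rw [if_neg hcond]
  -- put things together
  have hstep1 : muAt p η ≤ mm η := by
    rw [muAt_eq]
    exact csInf_le (muSet_bddBelow hG hN p hη) ⟨AA, mm, hfrAA, hmuAA, rfl⟩
  have hstep2 : mm η = T.F (p.c η) g := if_pos rfl
  have hgIcc : ∀ ν ∈ (p.c η).pos, g ν ∈ Set.Icc (0:ℝ) 1 := by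
    intro ν hν
    rw [hgsucc ν hν]
    have hνt := (hsucc ν hν).1
    have := muAt_main hG hN p hνt (hf ν hν).1 ((hf ν hν).2.1) (zero_semi hG p) ν hνt
      (List.prefix_refl _) (fresh_self ν (Af ν))
    exact ⟨this.1, this.2.1⟩
  have hglow : ∀ ν ∈ (p.c η).pos, muAt p ν ≤ g ν ∧ g ν < r' ν := by
    intro ν hν
    rw [hgsucc ν hν]
    constructor
    · rw [muAt_eq]
      exact csInf_le (muSet_bddBelow hG hN p (hsucc ν hν).1)
        ⟨Af ν, mf ν, (hf ν hν).1, (hf ν hν).2.1, rfl⟩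
    · exact (hf ν hν).2.2
  have hstep3 : T.F (p.c η) g < T.F (p.c η) (fun ν => muAt p ν) + ε :=
    hr' g hgIcc (fun ν hν => hglow ν hν)
  linarith [hstep1, hstep2.le, hstep3]

/-- Proposition `usesemi`: (1) every semi-`F`-measure is dominated by
`μ^F_p`; (2) a semi-`F`-measure positive at the root witnesses `p ∈ Q^mt_∅`;
(3) if `p ∈ Q^mt_∅` then `η ↦ μ^F_p(η)` is an `F`-measure on `p`. -/
theorem semi_measure_properties
    (T : MTriple H) (hG : T.Good) (hN : T.Nice) (p : Cond T) :
    (∀ m : List ℕ → ℝ, IsSemiMeasure p m → ∀ η ∈ p.tree, m η ≤ muAt p η) ∧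
    ((∃ m : List ℕ → ℝ, IsSemiMeasure p m ∧ 0 < m p.root) → 0 < muF p) ∧
    (0 < muF p →
      (∀ η ∈ p.tree, muAt p η ∈ Set.Icc (0 : ℝ) 1) ∧
      ∀ η ∈ p.tree, muAt p η = T.F (p.c η) (fun ν => muAt p ν)) := by
  refine ⟨fun m hm η hη => semi_le_muAt hG hN p hm hη, ?_, ?_⟩
  · rintro ⟨m, hm, hpos⟩
    exact lt_of_lt_of_le hpos (semi_le_muAt hG hN p hm p.root_mem)
  · intro _
    exact ⟨fun η hη => muAt_mem_Icc hG hN p hη,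
      fun η hη => le_antisymm (muAt_le_F hG hN p hη) (F_le_muAt hG hN p hη)⟩

end MeasuredTrees
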